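/- Under conditions (G1) and (G2), the map F(y) = K1(|y|)·y is strictly monotone on bounded sets; quantitatively, Φ(y,y') ≥ (θ/(θ+1)) · K1(max{|y|,|y'|}) · |y'−y|² for all y, y' ∈ ℝ^d, where θ > 0 is the constant from condition (G2). In particular, for every R > 0 and all |y|, |y'| ≤ R one has Φ(y,y') ≥ c_R |y'−y|² with c_R = (θ/(θ+1))·K1(R) > 0. -/

import Mathlib

section Aux

variable {g g' : ℝ → ℝ} {θ : ℝ}

lemma g_mono (hg_cont : ContinuousOn g (Set.Ici 0))
    (hg_deriv : ∀ s, 0 < s → HasDerivAt g (g' s) s)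
    (hg'_nonneg : ∀ s, 0 < s → 0 ≤ g' s) :
    MonotoneOn g (Set.Ici 0) := by
  apply monotoneOn_of_deriv_nonneg (convex_Ici 0) hg_cont
  · intro x hx
    rw [interior_Ici] at hx
    exact ((hg_deriv x hx).differentiableAt).differentiableWithinAt
  · intro x hx
    rw [interior_Ici] at hx
    rw [(hg_deriv x hx).deriv]
    exact hg'_nonneg x hx

/-- key lemma L : for 0 < s ≤ t, g(t)^θ * s ≤ g(s)^θ * t. -/
lemma lem_L (hg_cont : ContinuousOn g (Set.Ici 0))
    (hg_deriv : ∀ s, 0 < s → HasDerivAt g (g' s) s)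
    (hg'_nonneg : ∀ s, 0 < s → 0 ≤ g' s)
    (hg0 : 0 < g 0) (hθ : 0 < θ)
    (hG2 : ∀ s, 0 < s → θ * s * g' s ≤ g s)
    {s t : ℝ} (hs : 0 < s) (hst : s ≤ t) :
    g t ^ θ * s ≤ g s ^ θ * t := by
  have hmono := g_mono hg_cont hg_deriv hg'_nonneg
  have hgpos : ∀ x, 0 ≤ x → 0 < g x := fun x hx =>
    lt_of_lt_of_le hg0 (hmono Set.self_mem_Ici hx hx)
  have ht : 0 < t := lt_of_lt_of_le hs hst
  -- ψ(x) = θ * log (g x) - log x is antitone on Ioi 0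
  have hanti : AntitoneOn (fun x => θ * Real.log (g x) - Real.log x) (Set.Ioi 0) := by
    apply antitoneOn_of_deriv_nonpos (convex_Ioi 0)
    · apply ContinuousOn.sub
      · exact ContinuousOn.mul continuousOn_const <|
          (Real.continuousOn_log.comp (hg_cont.mono (Set.Ioi_subset_Ici le_rfl))
            (fun x hx => Set.mem_setOf.mpr (ne_of_gt (hgpos x (le_of_lt hx)))))
      · exact Real.continuousOn_log.mono (fun x hx => ne_of_gt hx)
    · intro x hx
      rw [interior_Ioi] at hx
      exact ((((hg_deriv x hx).log (ne_of_gt (hgpos x hx.le))).const_mul θ).sub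
          (Real.hasDerivAt_log (ne_of_gt hx))).differentiableAt.differentiableWithinAt
    · intro x hx
      rw [interior_Ioi] at hx
      have hD : HasDerivAt (fun x => θ * Real.log (g x) - Real.log x)
          (θ * (g' x / g x) - x⁻¹) x :=
        (((hg_deriv x hx).log (ne_of_gt (hgpos x hx.le))).const_mul θ).sub
          (Real.hasDerivAt_log (ne_of_gt hx))
      rw [hD.deriv]
      have hgx := hgpos x hx.le
      rw [sub_nonpos, inv_eq_one_div,
        show θ * (g' x / g x) = θ * g' x / g x from by ring,
        div_le_div_iff₀ hgx hx, one_mul]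
      nlinarith [hG2 x hx]
  have hψ := hanti (Set.mem_Ioi.mpr hs) (Set.mem_Ioi.mpr ht) hst
  simp only [] at hψ
  -- from θ log g t - log t ≤ θ log g s - log s conclude
  have hgs := hgpos s hs.le
  have hgt := hgpos t ht.le
  have hp1 : (0:ℝ) < g t ^ θ * s := mul_pos (Real.rpow_pos_of_pos hgt θ) hs
  have hp2 : (0:ℝ) < g s ^ θ * t := mul_pos (Real.rpow_pos_of_pos hgs θ) ht
  have hlog : Real.log (g t ^ θ * s) ≤ Real.log (g s ^ θ * t) := by
    rw [Real.log_mul (ne_of_gt (Real.rpow_pos_of_pos hgt θ)) (ne_of_gt hs),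
        Real.log_mul (ne_of_gt (Real.rpow_pos_of_pos hgs θ)) (ne_of_gt ht),
        Real.log_rpow hgt, Real.log_rpow hgs]
    linarith
  have := Real.exp_le_exp.mpr hlog
  rwa [Real.exp_log hp1, Real.exp_log hp2] at this

end Aux

section K1sec

variable {g g' sol K1 : ℝ → ℝ} {θ : ℝ}

lemma sol_mono (hg_cont : ContinuousOn g (Set.Ici 0))
    (hg_deriv : ∀ s, 0 < s → HasDerivAt g (g' s) s)
    (hg'_nonneg : ∀ s, 0 < s → 0 ≤ g' s) (hg0 : 0 < g 0)
    (hsol : ∀ ξ, 0 ≤ ξ → (0 ≤ sol ξ ∧ sol ξ * g (sol ξ) = ξ))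
    {a b : ℝ} (ha : 0 ≤ a) (hab : a ≤ b) : sol a ≤ sol b := by
  have hmono := g_mono hg_cont hg_deriv hg'_nonneg
  have hgpos : ∀ x, 0 ≤ x → 0 < g x := fun x hx =>
    lt_of_lt_of_le hg0 (hmono Set.self_mem_Ici hx hx)
  have hb : 0 ≤ b := le_trans ha hab
  obtain ⟨hsa, hea⟩ := hsol a ha
  obtain ⟨hsb, heb⟩ := hsol b hb
  by_contra hlt
  push_neg at hlt
  have h1 : g (sol b) ≤ g (sol a) := hmono hsb (le_trans hsb hlt.le) hlt.le
  have h2 : sol b * g (sol b) < sol a * g (sol a) := by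
    calc sol b * g (sol b) ≤ sol b * g (sol a) :=
          mul_le_mul_of_nonneg_left h1 hsb
      _ < sol a * g (sol a) := by
          exact mul_lt_mul_of_pos_right hlt (hgpos _ hsa)
  rw [hea, heb] at h2
  linarith

lemma K1_pos (hg_cont : ContinuousOn g (Set.Ici 0))
    (hg_deriv : ∀ s, 0 < s → HasDerivAt g (g' s) s)
    (hg'_nonneg : ∀ s, 0 < s → 0 ≤ g' s) (hg0 : 0 < g 0)
    (hsol : ∀ ξ, 0 ≤ ξ → (0 ≤ sol ξ ∧ sol ξ * g (sol ξ) = ξ))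
    (hK1 : ∀ ξ, 0 ≤ ξ → K1 ξ = 1 / g (sol ξ))
    {a : ℝ} (ha : 0 ≤ a) : 0 < K1 a := by
  have hmono := g_mono hg_cont hg_deriv hg'_nonneg
  have hgpos : ∀ x, 0 ≤ x → 0 < g x := fun x hx =>
    lt_of_lt_of_le hg0 (hmono Set.self_mem_Ici hx hx)
  rw [hK1 a ha]
  exact one_div_pos.mpr (hgpos _ (hsol a ha).1)

lemma K1_mono (hg_cont : ContinuousOn g (Set.Ici 0))
    (hg_deriv : ∀ s, 0 < s → HasDerivAt g (g' s) s)
    (hg'_nonneg : ∀ s, 0 < s → 0 ≤ g' s) (hg0 : 0 < g 0)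
    (hsol : ∀ ξ, 0 ≤ ξ → (0 ≤ sol ξ ∧ sol ξ * g (sol ξ) = ξ))
    (hK1 : ∀ ξ, 0 ≤ ξ → K1 ξ = 1 / g (sol ξ))
    {a b : ℝ} (ha : 0 ≤ a) (hab : a ≤ b) : K1 b ≤ K1 a := by
  have hmono := g_mono hg_cont hg_deriv hg'_nonneg
  have hgpos : ∀ x, 0 ≤ x → 0 < g x := fun x hx =>
    lt_of_lt_of_le hg0 (hmono Set.self_mem_Ici hx hx)
  have hb : 0 ≤ b := le_trans ha hab
  rw [hK1 a ha, hK1 b hb]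
  have hs := sol_mono hg_cont hg_deriv hg'_nonneg hg0 hsol ha hab
  exact one_div_le_one_div_of_le (hgpos _ (hsol a ha).1)
    (hmono (hsol a ha).1 (le_trans (hsol a ha).1 hs) hs)

/-- the key scalar inequality (ii). -/
lemma K1_key (hg_cont : ContinuousOn g (Set.Ici 0))
    (hg_deriv : ∀ s, 0 < s → HasDerivAt g (g' s) s)
    (hg'_nonneg : ∀ s, 0 < s → 0 ≤ g' s) (hg0 : 0 < g 0)
    (hθ : 0 < θ) (hG2 : ∀ s, 0 < s → θ * s * g' s ≤ g s)
    (hsol : ∀ ξ, 0 ≤ ξ → (0 ≤ sol ξ ∧ sol ξ * g (sol ξ) = ξ))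
    (hK1 : ∀ ξ, 0 ≤ ξ → K1 ξ = 1 / g (sol ξ))
    {a b : ℝ} (ha : 0 ≤ a) (hab : a ≤ b) :
    (K1 a - K1 b) * a ≤ 1 / (θ + 1) * K1 b * (b - a) := by
  have hmono := g_mono hg_cont hg_deriv hg'_nonneg
  have hgpos : ∀ x, 0 ≤ x → 0 < g x := fun x hx =>
    lt_of_lt_of_le hg0 (hmono Set.self_mem_Ici hx hx)
  have hb : 0 ≤ b := le_trans ha hab
  have hKb := K1_pos hg_cont hg_deriv hg'_nonneg hg0 hsol hK1 hb
  have hθ1 : (0:ℝ) < θ + 1 := by linarith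
  rcases eq_or_lt_of_le ha with h0 | hapos
  · rw [← h0]
    simp only [mul_zero, sub_zero]
    positivity
  -- now 0 < a
  obtain ⟨hsa, hea⟩ := hsol a ha
  obtain ⟨hsb, heb⟩ := hsol b hb
  have hsapos : 0 < sol a := by
    rcases eq_or_lt_of_le hsa with h | h
    · exfalso; rw [← h] at hea; simp at hea; linarith
    · exact h
  have hss := sol_mono hg_cont hg_deriv hg'_nonneg hg0 hsol ha hab
  have hsbpos : 0 < sol b := lt_of_lt_of_le hsapos hss
  have hga := hgpos _ hsa
  have hgb := hgpos _ hsb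
  have hL := lem_L hg_cont hg_deriv hg'_nonneg hg0 hθ hG2 hsapos hss
  set α : ℝ := 1 / (θ + 1) with hα
  have hα0 : 0 < α := by positivity
  have hα1 : α ≤ 1 := by
    rw [hα, div_le_one hθ1]; linarith
  -- g sb ^ (θ+1) * a ≤ g sa ^ (θ+1) * b
  have h2 : g (sol b) ^ (θ+1) * a ≤ g (sol a) ^ (θ+1) * b := by
    have := mul_le_mul_of_nonneg_right hL (le_of_lt (mul_pos hga hgb))
    calc g (sol b) ^ (θ+1) * a
        = g (sol b) ^ θ * sol a * (g (sol a) * g (sol b)) := by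
          rw [Real.rpow_add_one (ne_of_gt hgb)]
          linear_combination (-(g (sol b) ^ θ * g (sol b))) * hea
      _ ≤ g (sol a) ^ θ * sol b * (g (sol a) * g (sol b)) := this
      _ = g (sol a) ^ (θ+1) * b := by
          rw [Real.rpow_add_one (ne_of_gt hga)]
          linear_combination (g (sol a) ^ θ * g (sol a)) * heb
  -- g sb * a ^ α ≤ g sa * b ^ α
  have hθα : (θ + 1) * α = 1 := by rw [hα]; field_simp
  have hkey : ∀ x : ℝ, 0 < x → (x ^ (θ+1)) ^ α = x := by
    intro x hx
    rw [← Real.rpow_mul hx.le, hθα, Real.rpow_one]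
  have h3 : g (sol b) * a ^ α ≤ g (sol a) * b ^ α := by
    have h4 := Real.rpow_le_rpow (by positivity) h2 hα0.le
    rwa [Real.mul_rpow (by positivity) ha, Real.mul_rpow (by positivity) hb,
      hkey _ hgb, hkey _ hga] at h4
  -- geometric-arithmetic mean
  have hgm : b ^ α * a ^ (1 - α) ≤ α * b + (1 - α) * a :=
    Real.geom_mean_le_arith_mean2_weighted hα0.le (by linarith) hb ha (by ring)
  have haa : a ^ α * a ^ (1 - α) = a := by
    rw [← Real.rpow_add hapos, add_sub_cancel, Real.rpow_one]
  -- K1 a * a ≤ K1 b * (α*b + (1-α)*a)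
  have hKaa : K1 a * a ≤ K1 b * (α * b + (1 - α) * a) := by
    rw [hK1 a ha, hK1 b hb]
    have ha1 : (0:ℝ) ≤ a ^ (1 - α) := Real.rpow_nonneg ha _
    calc 1 / g (sol a) * a = a ^ α / g (sol a) * a ^ (1-α) := by
          rw [div_mul_eq_mul_div, div_mul_eq_mul_div, haa]; ring
      _ ≤ b ^ α / g (sol b) * a ^ (1-α) := by
          apply mul_le_mul_of_nonneg_right _ ha1
          rw [div_le_div_iff₀ hga hgb]
          nlinarith [h3]
      _ = b ^ α * a ^ (1-α) / g (sol b) := by ring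
      _ ≤ (α * b + (1 - α) * a) / g (sol b) := by
          gcongr
      _ = 1 / g (sol b) * (α * b + (1 - α) * a) := by ring
  have hKa := K1_pos hg_cont hg_deriv hg'_nonneg hg0 hsol hK1 ha
  nlinarith [hKaa, hKb.le, hab]

end K1sec

/-- vector estimate assuming ‖y‖ ≤ ‖y'‖. -/
lemma vec_est {d : ℕ} (K1 : ℝ → ℝ) (θ : ℝ) (hθ : 0 < θ)
    (hK1pos : ∀ ξ : ℝ, 0 ≤ ξ → 0 < K1 ξ)
    (hmono : ∀ a b : ℝ, 0 ≤ a → a ≤ b → K1 b ≤ K1 a)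
    (hii : ∀ a b : ℝ, 0 ≤ a → a ≤ b → (K1 a - K1 b) * a ≤ 1 / (θ + 1) * K1 b * (b - a))
    (y y' : EuclideanSpace ℝ (Fin d)) (h : ‖y‖ ≤ ‖y'‖) :
    θ / (θ + 1) * K1 ‖y'‖ * ‖y' - y‖ ^ 2 ≤
      (inner ℝ (K1 ‖y'‖ • y' - K1 ‖y‖ • y) (y' - y) : ℝ) := by
  have hθ1 : (0:ℝ) < θ + 1 := by linarith
  set a := ‖y‖ with ha
  set b := ‖y'‖ with hb
  set z := y' - y with hz
  set n := ‖z‖ with hn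
  have hn0 : 0 ≤ n := norm_nonneg z
  have hid : (inner ℝ (K1 b • y' - K1 a • y) z : ℝ) =
      K1 b * n ^ 2 + (K1 b - K1 a) * (inner ℝ y z : ℝ) := by
    have hy' : y' = z + y := by rw [hz, sub_add_cancel]
    rw [inner_sub_left, real_inner_smul_left, real_inner_smul_left, hy', inner_add_left,
      real_inner_self_eq_norm_sq]
    ring
  have habs := abs_real_inner_le_norm y z
  have h1 : -(a * n) ≤ (inner ℝ y z : ℝ) := neg_le_of_abs_le habs
  have hK := hmono a b (norm_nonneg y) h
  have h1' : (inner ℝ y z : ℝ) ≤ a * n := le_of_abs_le habs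
  have step1 : -((K1 a - K1 b) * (a * n)) ≤ (K1 b - K1 a) * (inner ℝ y z : ℝ) := by
    have h2 : 0 ≤ K1 a - K1 b := sub_nonneg.mpr hK
    nlinarith [mul_le_mul_of_nonneg_left h1' h2]
  have hba : b - a ≤ n := by
    rw [ha, hb, hn, hz]
    exact norm_sub_norm_le y' y
  have hKb0 : 0 ≤ K1 b := (hK1pos b (norm_nonneg y')).le
  have step2 : (K1 a - K1 b) * (a * n) ≤ 1 / (θ + 1) * K1 b * n ^ 2 := by
    have h4 := mul_le_mul_of_nonneg_right (hii a b (norm_nonneg y) h) hn0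
    have h5 : 1 / (θ + 1) * K1 b * (b - a) * n ≤ 1 / (θ + 1) * K1 b * n ^ 2 := by
      have h6 : 0 ≤ 1 / (θ + 1) * K1 b := by positivity
      nlinarith [mul_le_mul_of_nonneg_right hba hn0]
    nlinarith
  have heq : θ / (θ + 1) * K1 b * n ^ 2 = K1 b * n ^ 2 - 1 / (θ + 1) * K1 b * n ^ 2 := by
    field_simp
    ring
  rw [hid]
  linarith



/-- Under conditions (G1) and (G2), `F(y) = K1(|y|)·y` is strictly monotone on bounded
sets: `Φ(y,y') ≥ (θ/(θ+1))·K1(max{|y|,|y'|})·|y'−y|²`, and in particular on every ball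
of radius `R` one has `Φ(y,y') ≥ c_R·|y'−y|²` with `c_R = (θ/(θ+1))·K1(R) > 0`
(Proposition III.6 of Aulisa et al.). -/
theorem forchheimer_map_strictly_monotone_on_bounded_sets
    (d : ℕ) (hd : 1 ≤ d)
    (g g' sol K1 : ℝ → ℝ) (θ : ℝ)
    -- condition (G1)
    (hg_cont : ContinuousOn g (Set.Ici 0))
    (hg_deriv : ∀ s, 0 < s → HasDerivAt g (g' s) s)
    (hg'_cont : ContinuousOn g' (Set.Ioi 0))
    (hg'_nonneg : ∀ s, 0 < s → 0 ≤ g' s)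
    (hg0 : 0 < g 0)
    -- condition (G2)
    (hθ : 0 < θ)
    (hG2 : ∀ s, 0 < s → θ * s * g' s ≤ g s)
    -- the implicit function s(ξ): the unique nonnegative solution of s·g(s) = ξ
    (hsol : ∀ ξ, 0 ≤ ξ → (0 ≤ sol ξ ∧ sol ξ * g (sol ξ) = ξ))
    -- the Forchheimer coefficient
    (hK1 : ∀ ξ, 0 ≤ ξ → K1 ξ = 1 / g (sol ξ)) :
    (∀ y y' : EuclideanSpace ℝ (Fin d),
      θ / (θ + 1) * K1 (max ‖y‖ ‖y'‖) * ‖y' - y‖ ^ 2 ≤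
        (inner ℝ (K1 ‖y'‖ • y' - K1 ‖y‖ • y) (y' - y) : ℝ)) ∧
    (∀ R : ℝ, 0 < R →
      0 < θ / (θ + 1) * K1 R ∧
      ∀ y y' : EuclideanSpace ℝ (Fin d), ‖y‖ ≤ R → ‖y'‖ ≤ R →
        θ / (θ + 1) * K1 R * ‖y' - y‖ ^ 2 ≤
          (inner ℝ (K1 ‖y'‖ • y' - K1 ‖y‖ • y) (y' - y) : ℝ)) := by
  have hK1pos : ∀ ξ : ℝ, 0 ≤ ξ → 0 < K1 ξ := fun ξ hξ =>
    K1_pos hg_cont hg_deriv hg'_nonneg hg0 hsol hK1 hξ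
  have hmono : ∀ a b : ℝ, 0 ≤ a → a ≤ b → K1 b ≤ K1 a := fun a b ha hab =>
    K1_mono hg_cont hg_deriv hg'_nonneg hg0 hsol hK1 ha hab
  have hii : ∀ a b : ℝ, 0 ≤ a → a ≤ b → (K1 a - K1 b) * a ≤ 1 / (θ + 1) * K1 b * (b - a) :=
    fun a b ha hab => K1_key hg_cont hg_deriv hg'_nonneg hg0 hθ hG2 hsol hK1 ha hab
  have main : ∀ y y' : EuclideanSpace ℝ (Fin d),
      θ / (θ + 1) * K1 (max ‖y‖ ‖y'‖) * ‖y' - y‖ ^ 2 ≤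
        (inner ℝ (K1 ‖y'‖ • y' - K1 ‖y‖ • y) (y' - y) : ℝ) := by
    intro y y'
    rcases le_total ‖y‖ ‖y'‖ with h | h
    · rw [max_eq_right h]
      exact vec_est K1 θ hθ hK1pos hmono hii y y' h
    · rw [max_eq_left h]
      have := vec_est K1 θ hθ hK1pos hmono hii y' y h
      have heq : (inner ℝ (K1 ‖y‖ • y - K1 ‖y'‖ • y') (y - y') : ℝ) =
          (inner ℝ (K1 ‖y'‖ • y' - K1 ‖y‖ • y) (y' - y) : ℝ) := by
        rw [show K1 ‖y‖ • y - K1 ‖y'‖ • y' = -(K1 ‖y'‖ • y' - K1 ‖y‖ • y) by abel,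
          show (y - y' : EuclideanSpace ℝ (Fin d)) = -(y' - y) by abel, inner_neg_neg]
      rw [heq, norm_sub_rev] at this
      exact this
  refine ⟨main, fun R hR => ⟨mul_pos (div_pos hθ (by linarith)) (hK1pos R hR.le), fun y y' hy hy' => ?_⟩⟩
  · have hmax0 : (0:ℝ) ≤ max ‖y‖ ‖y'‖ := le_max_of_le_left (norm_nonneg y)
    have hmaxR : max ‖y‖ ‖y'‖ ≤ R := max_le hy hy'
    have hKR : K1 R ≤ K1 (max ‖y‖ ‖y'‖) := hmono _ _ hmax0 hmaxR
    calc θ / (θ + 1) * K1 R * ‖y' - y‖ ^ 2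
        ≤ θ / (θ + 1) * K1 (max ‖y‖ ‖y'‖) * ‖y' - y‖ ^ 2 := by
          apply mul_le_mul_of_nonneg_right _ (sq_nonneg _)
          apply mul_le_mul_of_nonneg_left hKR (by positivity)
      _ ≤ _ := main y y'
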